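/- For a negative definite integer symmetric b×b matrix Q with basis vectors x₁,…,x_b, every characteristic covector c has a representative c' ≡ c (mod 2·Qℤ^b) satisfying (Qx_i)·x_i ≤ c'(x_i) < |(Qx_i)·x_i| for all i, and c' has square (w.r.t. Q⁻¹) at least that of c. -/

import Mathlib

open Matrix

/-- The square of a covector `c` with respect to `Q⁻¹` (over `ℚ`). -/
noncomputable def covSq {b : ℕ} (Q : Matrix (Fin b) (Fin b) ℤ) (c : Fin b → ℤ) : ℚ :=
  (fun i => (c i : ℚ)) ⬝ᵥ ((Q.map (Int.cast : ℤ → ℚ))⁻¹).mulVec (fun i => (c i : ℚ))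

open Finset
section aux

variable {b : ℕ}

lemma exists_int_smul (v : Fin b → ℚ) :
    ∃ (N : ℤ) (x : Fin b → ℤ), 0 < N ∧ ∀ i, (x i : ℚ) = N * v i := by
  refine ⟨∏ i, ((v i).den : ℤ), fun i => (v i).num * ∏ j ∈ univ.erase i, ((v j).den : ℤ),
    Finset.prod_pos fun i _ => by exact_mod_cast (v i).den_pos, fun i => ?_⟩
  push_cast
  rw [← Finset.mul_prod_erase univ (fun j => ((v j).den : ℚ)) (mem_univ i)]
  have hden : ((v i).den : ℚ) ≠ 0 := Nat.cast_ne_zero.mpr (v i).den_nz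
  have h : ((v i).num : ℚ) = v i * (v i).den :=
    ((eq_div_iff hden).mp (Rat.num_div_den (v i)).symm).symm
  rw [h]; ring

variable (Q : Matrix (Fin b) (Fin b) ℤ)

lemma cast_mulVec (x : Fin b → ℤ) :
    (fun i => ((Q.mulVec x) i : ℚ))
      = (Q.map (Int.cast : ℤ → ℚ)).mulVec (fun i => (x i : ℚ)) := by
  funext i
  have h := RingHom.map_mulVec (Int.castRingHom ℚ) Q x i
  simp at h
  exact h

lemma cast_dot (x z : Fin b → ℤ) :
    ((x ⬝ᵥ z : ℤ) : ℚ) = (fun i => (x i : ℚ)) ⬝ᵥ (fun i => (z i : ℚ)) := by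
  simp [dotProduct]

variable (hneg : ∀ x : Fin b → ℤ, x ≠ 0 → x ⬝ᵥ Q.mulVec x < 0)

include hneg in
lemma qneg_rat (v : Fin b → ℚ) :
    v ⬝ᵥ (Q.map (Int.cast : ℤ → ℚ)).mulVec v ≤ 0 := by
  obtain ⟨N, x, hN, hx⟩ := exists_int_smul v
  have hNq : (0:ℚ) < (N:ℚ) := by exact_mod_cast hN
  have hxv : (fun i => (x i : ℚ)) = (N : ℚ) • v := by funext i; simp [hx]
  have key : ((x ⬝ᵥ Q.mulVec x : ℤ) : ℚ)
      = (N:ℚ)^2 * (v ⬝ᵥ (Q.map (Int.cast : ℤ → ℚ)).mulVec v) := by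
    rw [cast_dot, cast_mulVec, hxv, smul_dotProduct, mulVec_smul, dotProduct_smul,
      smul_eq_mul, smul_eq_mul]
    ring
  by_cases hx0 : x = 0
  · have hv : v = 0 := by
      funext i
      have := hx i
      rw [hx0] at this
      simp only [Pi.zero_apply, Int.cast_zero] at this
      have := this.symm
      rcases mul_eq_zero.mp this with h | h
      · exact absurd h (ne_of_gt hNq)
      · simpa using h
    rw [hv]; simp
  · have h1 : ((x ⬝ᵥ Q.mulVec x : ℤ):ℚ) < 0 := by exact_mod_cast hneg x hx0
    nlinarith [sq_nonneg (N:ℚ)]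

include hneg in
lemma qdet_ne : (Q.map (Int.cast : ℤ → ℚ)).det ≠ 0 := by
  intro h
  obtain ⟨v, hvne, hveq⟩ := (Matrix.exists_mulVec_eq_zero_iff).mpr h
  obtain ⟨N, x, hN, hx⟩ := exists_int_smul v
  have hNq : (0:ℚ) < (N:ℚ) := by exact_mod_cast hN
  have hx0 : x ≠ 0 := by
    intro h0
    apply hvne
    funext i
    have := hx i
    rw [h0] at this
    simp only [Pi.zero_apply, Int.cast_zero] at this
    rcases mul_eq_zero.mp this.symm with h | h
    · exact absurd h (ne_of_gt hNq)
    · simpa using h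
  have hQx : Q.mulVec x = 0 := by
    have hxv : (fun i => (x i : ℚ)) = (N : ℚ) • v := by funext i; simp [hx]
    have h2 : (fun i => ((Q.mulVec x) i : ℚ)) = 0 := by
      rw [cast_mulVec, hxv, mulVec_smul, hveq]
      simp
    funext i
    have := congrFun h2 i
    simp only [Pi.zero_apply] at this ⊢
    exact_mod_cast this
  have := hneg x hx0
  rw [hQx] at this
  simp at this

include hneg in
lemma covSq_nonpos (z : Fin b → ℤ) : covSq Q z ≤ 0 := by
  set A := Q.map (Int.cast : ℤ → ℚ) with hA
  have hu : A * A⁻¹ = 1 :=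
    Matrix.mul_nonsing_inv A (isUnit_iff_ne_zero.mpr (qdet_ne Q hneg))
  set zc := fun i => ((z i : ℚ)) with hzc
  have hz : A.mulVec (A⁻¹.mulVec zc) = zc := by
    rw [mulVec_mulVec, hu, one_mulVec]
  have : covSq Q z = (A⁻¹.mulVec zc) ⬝ᵥ A.mulVec (A⁻¹.mulVec zc) := by
    rw [hz]
    rw [covSq, dotProduct_comm]
  rw [this]
  exact qneg_rat Q hneg _

include hneg in
lemma covSq_expand (hsym : Q.IsSymm) (c y : Fin b → ℤ) :
    covSq Q (c + (2 • Q).mulVec y)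
      = covSq Q c + 4 * ((c ⬝ᵥ y + y ⬝ᵥ Q.mulVec y : ℤ) : ℚ) := by
  set A := Q.map (Int.cast : ℤ → ℚ) with hA
  have hdet := qdet_ne Q hneg
  have hu1 : A * A⁻¹ = 1 := Matrix.mul_nonsing_inv A (isUnit_iff_ne_zero.mpr hdet)
  have hu2 : A⁻¹ * A = 1 := Matrix.nonsing_inv_mul A (isUnit_iff_ne_zero.mpr hdet)
  have hsymA : Aᵀ = A := hsym.map _
  set cc := fun i => ((c i : ℚ)) with hcc
  set yc := fun i => ((y i : ℚ)) with hyc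
  have harg : (fun i => (((c + (2 • Q).mulVec y) i : ℤ) : ℚ))
      = cc + A.mulVec ((2:ℚ) • yc) := by
    funext i
    have h1 : ((2 • Q).mulVec y) i = 2 * (Q.mulVec y) i := by
      rw [Matrix.smul_mulVec]
      simp
    have h2 := congrFun (cast_mulVec Q y) i
    have h3 : (A.mulVec ((2:ℚ) • yc)) i = 2 * (A.mulVec yc) i := by
      rw [mulVec_smul]
      simp
    calc (((c + (2 • Q).mulVec y) i : ℤ) : ℚ)
        = ((c i : ℚ) + 2 * (((Q.mulVec y) i : ℤ) : ℚ)) := by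
          rw [Pi.add_apply, h1]; push_cast; ring
      _ = (cc + A.mulVec ((2:ℚ) • yc)) i := by
          rw [h2, Pi.add_apply, h3]
  have hABw : ∀ w : Fin b → ℚ, A⁻¹.mulVec (A.mulVec w) = w := by
    intro w; rw [mulVec_mulVec, hu2, one_mulVec]
  have hcross : ∀ w : Fin b → ℚ, (A.mulVec w) ⬝ᵥ (A⁻¹.mulVec cc) = cc ⬝ᵥ w := by
    intro w
    rw [dotProduct_comm, dotProduct_mulVec, ← mulVec_transpose, hsymA,
      mulVec_mulVec, hu1, one_mulVec, dotProduct_comm]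
  have hdot : ((c ⬝ᵥ y : ℤ) : ℚ) = cc ⬝ᵥ yc := cast_dot c y
  have hquad : ((y ⬝ᵥ Q.mulVec y : ℤ) : ℚ) = yc ⬝ᵥ A.mulVec yc := by
    rw [cast_dot, cast_mulVec]
  rw [covSq, harg]
  rw [mulVec_add, dotProduct_add, add_dotProduct, add_dotProduct, hABw]
  rw [hcross]
  rw [mulVec_smul, smul_dotProduct, dotProduct_smul, dotProduct_smul]
  have hlast : ((A.mulVec yc) ⬝ᵥ yc) = yc ⬝ᵥ A.mulVec yc := dotProduct_comm _ _
  rw [hlast]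
  push_cast
  rw [hdot, hquad, covSq]
  simp only [smul_eq_mul]
  ring

end aux

lemma f_step {b : ℕ} (Q : Matrix (Fin b) (Fin b) ℤ) (hsym : Q.IsSymm)
    (c y : Fin b → ℤ) (i : Fin b) (t : ℤ) :
    c ⬝ᵥ (y + Pi.single i t) + (y + Pi.single i t) ⬝ᵥ Q.mulVec (y + Pi.single i t)
      = (c ⬝ᵥ y + y ⬝ᵥ Q.mulVec y) + t * ((c + (2 • Q).mulVec y) i) + t ^ 2 * Q i i := by
  have hQT : Qᵀ = Q := hsym
  have h1 : ((2 • Q).mulVec y) i = 2 * (Q.mulVec y) i := by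
    rw [Matrix.smul_mulVec]; simp
  simp only [dotProduct_add, add_dotProduct, mulVec_add]
  have hsd : y ⬝ᵥ Q.mulVec (Pi.single i t) = Pi.single i t ⬝ᵥ Q.mulVec y := by
    rw [dotProduct_mulVec, ← mulVec_transpose, hQT, dotProduct_comm]
  rw [hsd]
  simp only [mulVec_single, dotProduct_single, single_dotProduct, Pi.add_apply, h1,
    Pi.smul_apply, op_smul_eq_mul, Matrix.col, Matrix.transpose_apply]
  ring


/-- Every characteristic covector for a negative definite symmetric
integer matrix `Q` has a representative modulo `2Qℤ^b` lying in the hypercube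
`Q i i ≤ c' i < −Q i i`, whose square is at least that of `c`. -/
theorem stmt_5 (b : ℕ) (Q : Matrix (Fin b) (Fin b) ℤ) (hsym : Q.IsSymm)
    (hneg : ∀ x : Fin b → ℤ, x ≠ 0 → x ⬝ᵥ Q.mulVec x < 0)
    (c : Fin b → ℤ) (hchar : ∀ x : Fin b → ℤ, c ⬝ᵥ x ≡ x ⬝ᵥ Q.mulVec x [ZMOD 2]) :
    ∃ c' : Fin b → ℤ,
      (∃ y : Fin b → ℤ, c' - c = (2 • Q).mulVec y) ∧
      (∀ i, Q i i ≤ c' i ∧ c' i < -(Q i i)) ∧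
      covSq Q c ≤ covSq Q c' := by
  classical
  set A := Q.map (Int.cast : ℤ → ℚ) with hA
  have hdet := qdet_ne Q hneg
  have hu2 : A⁻¹ * A = 1 := Matrix.nonsing_inv_mul A (isUnit_iff_ne_zero.mpr hdet)
  set f : (Fin b → ℤ) → ℤ := fun y => c ⬝ᵥ y + y ⬝ᵥ Q.mulVec y with hf
  have hcov : ∀ y, covSq Q (c + (2 • Q).mulVec y) = covSq Q c + 4 * (f y : ℚ) :=
    fun y => covSq_expand Q hneg hsym c y
  -- maximize f
  have hbd : ∃ B : ℤ, ∀ n : ℤ, (∃ y, f y = n) → n ≤ B := by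
    refine ⟨⌈(-covSq Q c)/4⌉, ?_⟩
    rintro n ⟨y, rfl⟩
    have h0 : covSq Q c + 4 * (f y : ℚ) ≤ 0 := by
      rw [← hcov y]; exact covSq_nonpos Q hneg _
    have h1 : (f y : ℚ) ≤ (-covSq Q c)/4 := by linarith
    exact_mod_cast h1.trans (Int.le_ceil _)
  obtain ⟨M, ⟨y₀, hy₀⟩, hMmax⟩ := Int.exists_greatest_of_bdd hbd ⟨f 0, 0, rfl⟩
  have hM0 : 0 ≤ M := by
    have := hMmax (f 0) ⟨0, rfl⟩
    have hf0 : f 0 = 0 := by simp [hf]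
    omega
  have hfs : ∀ (y : Fin b → ℤ) (i : Fin b) (t : ℤ),
      f (y + Pi.single i t) = f y + t * ((c + (2 • Q).mulVec y) i) + t ^ 2 * Q i i :=
    fun y i t => f_step Q hsym c y i t
  have hbox : ∀ y, f y = M → ∀ i,
      Q i i ≤ (c + (2 • Q).mulVec y) i ∧ (c + (2 • Q).mulVec y) i ≤ -Q i i := by
    intro y hy i
    have hp := hMmax (f (y + Pi.single i 1)) ⟨_, rfl⟩
    have hm := hMmax (f (y + Pi.single i (-1))) ⟨_, rfl⟩
    rw [hfs y i 1, hy] at hp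
    rw [hfs y i (-1), hy] at hm
    constructor <;> nlinarith [hp, hm]
  -- bound on sums of y for maximizers
  have hyrep : ∀ y : Fin b → ℤ,
      (fun i => (y i : ℚ)) = A⁻¹.mulVec (fun j => (((Q.mulVec y) j : ℤ) : ℚ)) := by
    intro y
    rw [cast_mulVec, mulVec_mulVec, hu2, one_mulVec]
  set K : Fin b → ℤ := fun j => |c j| - Q j j with hK
  have hQyb : ∀ y, f y = M → ∀ j, |(Q.mulVec y) j| ≤ K j := by
    intro y hy j
    obtain ⟨hl, hr⟩ := hbox y hy j
    have hj : (c + (2 • Q).mulVec y) j = c j + 2 * (Q.mulVec y) j := by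
      rw [Pi.add_apply, Matrix.smul_mulVec]; simp
    rw [hj] at hl hr
    have h1 : -|c j| ≤ c j := neg_abs_le _
    have h2 : c j ≤ |c j| := le_abs_self _
    have hKj : K j = |c j| - Q j j := rfl
    rw [abs_le, hKj]
    constructor <;> rcases le_or_gt 0 ((Q.mulVec y) j) with h | h <;>
      linarith [abs_nonneg (c j)]
  set Bq : ℚ := ∑ i, ∑ j, |A⁻¹ i j| * (K j : ℚ) with hBq
  have hsumb : ∀ y, f y = M → (∑ i, y i) ≤ ⌈Bq⌉ := by
    intro y hy
    have hyi : ∀ i, (y i : ℚ) = ∑ j, A⁻¹ i j * (((Q.mulVec y) j : ℤ) : ℚ) := by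
      intro i
      have := congrFun (hyrep y) i
      rw [this]
      simp [Matrix.mulVec, dotProduct]
    have habs : ∀ i, |(y i : ℚ)| ≤ ∑ j, |A⁻¹ i j| * (K j : ℚ) := by
      intro i
      rw [hyi i]
      refine (Finset.abs_sum_le_sum_abs _ _).trans (Finset.sum_le_sum fun j _ => ?_)
      rw [abs_mul]
      refine mul_le_mul_of_nonneg_left ?_ (abs_nonneg _)
      have := hQyb y hy j
      have h2 : |(((Q.mulVec y) j : ℤ) : ℚ)| ≤ (K j : ℚ) := by
        rw [← Int.cast_abs]
        exact_mod_cast this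
      exact h2
    have hsq : ((∑ i, y i : ℤ) : ℚ) ≤ Bq := by
      push_cast
      refine (Finset.sum_le_sum fun i _ => (le_abs_self _).trans (habs i)).trans ?_
      rw [hBq]
    exact_mod_cast hsq.trans (Int.le_ceil _)
  obtain ⟨m, ⟨y₁, hfy₁, hsy₁⟩, hm2⟩ :=
    Int.exists_greatest_of_bdd (P := fun m => ∃ y, f y = M ∧ (∑ i, y i) = m)
      ⟨⌈Bq⌉, by rintro z ⟨y, hy, rfl⟩; exact hsumb y hy⟩ ⟨∑ i, y₀ i, y₀, hy₀, rfl⟩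
  refine ⟨c + (2 • Q).mulVec y₁, ⟨y₁, add_sub_cancel_left c _⟩, ?_, ?_⟩
  · intro i
    obtain ⟨hl, hr⟩ := hbox y₁ hfy₁ i
    refine ⟨hl, lt_of_le_of_ne hr ?_⟩
    intro heq
    have e1 : f (y₁ + Pi.single i 1) = M := by
      rw [hfs y₁ i 1, hfy₁, heq]; ring
    have e2 : (∑ k, ((y₁ + Pi.single i (1:ℤ)) : Fin b → ℤ) k) = m + 1 := by
      simp only [Pi.add_apply]
      rw [Finset.sum_add_distrib, hsy₁]
      congr 1
      simp [Pi.single_apply]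
    have := hm2 (m + 1) ⟨_, e1, e2⟩
    omega
  · rw [hcov y₁, hfy₁]
    have : (0:ℚ) ≤ (M:ℚ) := by exact_mod_cast hM0
    linarith
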